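/- For distinct nodes i ≠ j, a real parameter α, and a uniformly random spanning converging forest φ, define ω̄_ij(φ,α) = α·ω̂_ij(φ) + (1−α)·ω̃_ij(φ). Then ω̄_ij(φ,α) is unbiased for ω_ij with variance Var(ω̄_ij(·,α)) = (ω_ij(2+d_j)/(1+d_j))·(α − 1/(2+d_j))² + ω_ij/(2+d_j) − ω_ij², which is minimized at α = 1/(2+d_j) with minimum value ω_ij/(2+d_j) − ω_ij². -/

import Mathlib

open Finset

/-- A spanning converging forest of the digraph with edge relation `E`,
encoded by its successor map `f : V → Option V` (`f i = some j` means edge `(i,j)`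
is in the forest, `f i = none` means `i` is a root).  Acyclicity is expressed by a
height function that strictly decreases along edges. -/
def IsSCF {V : Type*} (E : V → V → Prop) (f : V → Option V) : Prop :=
  (∀ i j, f i = some j → E i j) ∧ ∃ h : V → ℕ, ∀ i j, f i = some j → h j < h i

open scoped Classical in
/-- The set `F` of all spanning converging forests of the digraph `E`. -/
noncomputable def forests {V : Type*} [Fintype V] [DecidableEq V]
    (E : V → V → Prop) : Finset (V → Option V) :=
  Finset.univ.filter (IsSCF E)

/-- The root `r_φ(i)` of the tree containing node `i` in the forest `f`:
follow successors until reaching a root. -/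
def rootOf {V : Type*} [Fintype V] (f : V → Option V) (i : V) : V :=
  (fun x => (f x).getD x)^[Fintype.card V] i

/-- The combinatorial forest-matrix entry `ω_{ij} = |F_{ij}| / |F|`. -/
noncomputable def fOmega {V : Type*} [Fintype V] [DecidableEq V]
    (E : V → V → Prop) (i j : V) : ℝ :=
  (((forests E).filter (fun f => rootOf f i = j)).card : ℝ) / ((forests E).card : ℝ)

/-- Expectation of `g` under a uniformly random spanning converging forest. -/
noncomputable def expVal {V : Type*} [Fintype V] [DecidableEq V]
    (E : V → V → Prop) (g : (V → Option V) → ℝ) : ℝ :=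
  (∑ f ∈ forests E, g f) / ((forests E).card : ℝ)

/-- Variance of `g` under a uniformly random spanning converging forest. -/
noncomputable def varVal {V : Type*} [Fintype V] [DecidableEq V]
    (E : V → V → Prop) (g : (V → Option V) → ℝ) : ℝ :=
  expVal E (fun f => (g f - expVal E g) ^ 2)

/-- The indicator estimator `ω̂_{ij}(φ) = 1_{r_φ(i) = j}`. -/
noncomputable def indEst {V : Type*} [Fintype V] [DecidableEq V]
    (i j : V) (f : V → Option V) : ℝ :=
  if rootOf f i = j then 1 else 0

/-- Out-degree `d_i` of node `i`. -/
def outDeg {V : Type*} [Fintype V] (E : V → V → Prop) [DecidableRel E] (i : V) : ℕ :=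
  (Finset.univ.filter (fun j => E i j)).card

/-- In-neighbors `N⁻(j)` of node `j`. -/
def inNbrs {V : Type*} [Fintype V] (E : V → V → Prop) [DecidableRel E] (j : V) : Finset V :=
  Finset.univ.filter (fun k => E k j)

/-- The out-degree Laplacian `L = D - A`. -/
noncomputable def lap {V : Type*} [Fintype V] [DecidableEq V]
    (E : V → V → Prop) [DecidableRel E] : Matrix V V ℝ :=
  Matrix.of fun i j => (if i = j then (outDeg E i : ℝ) else 0) - (if E i j then (1 : ℝ) else 0)

/-- The forest matrix `Ω = (I + L)⁻¹`. -/
noncomputable def forestMatrix {V : Type*} [Fintype V] [DecidableEq V]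
    (E : V → V → Prop) [DecidableRel E] : Matrix V V ℝ :=
  (1 + lap E)⁻¹



set_option linter.unusedSectionVars false

namespace SCFAux

variable {V : Type*} [Fintype V] [DecidableEq V]

/-- one step of the successor map -/
def stp (f : V → Option V) (x : V) : V := (f x).getD x

lemma stp_none {f : V → Option V} {y : V} (h : f y = none) : stp f y = y := by
  simp [stp, h]

lemma stp_some {f : V → Option V} {x y : V} (h : f x = some y) : stp f x = y := by
  simp [stp, h]

lemma iterate_fix {f : V → Option V} {y : V} (h : f y = none) (n : ℕ) :
    (stp f)^[n] y = y :=
  Function.iterate_fixed (stp_none h) n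

lemma iterate_agree {f g : V → Option V} {x : V} {n : ℕ}
    (h : ∀ t < n, f ((stp g)^[t] x) = g ((stp g)^[t] x)) :
    (stp f)^[n] x = (stp g)^[n] x := by
  induction n with
  | zero => rfl
  | succ n ih =>
    rw [Function.iterate_succ_apply', Function.iterate_succ_apply',
      ih (fun t ht => h t (by omega))]
    simp only [stp, h n (by omega)]

/-- minimal-time pigeonhole: if some iterate hits a `none`-point, then the
`card V`-th iterate does, and every `none`-hit is at the same point. -/
lemma root_spec {f : V → Option V} {x : V} (h : ∃ n, f ((stp f)^[n] x) = none) :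
    f ((stp f)^[Fintype.card V] x) = none ∧
      ∀ n, f ((stp f)^[n] x) = none → (stp f)^[n] x = (stp f)^[Fintype.card V] x := by
  classical
  set n₀ := Nat.find h with hn₀
  have hfind : f ((stp f)^[n₀] x) = none := Nat.find_spec h
  have hdist : ∀ a b, a < b → b ≤ n₀ → (stp f)^[a] x ≠ (stp f)^[b] x := by
    intro a b hab hb heq
    have h1 : (stp f)^[n₀] x = (stp f)^[n₀ - b + a] x := by
      conv_lhs => rw [show n₀ = (n₀ - b) + b from by omega]
      rw [Function.iterate_add_apply, ← heq, ← Function.iterate_add_apply]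
    have h2 : f ((stp f)^[n₀ - b + a] x) = none := h1 ▸ hfind
    have := Nat.find_min' h h2
    omega
  have hlt : n₀ < Fintype.card V := by
    have hinj : Function.Injective (fun t : Fin (n₀ + 1) => (stp f)^[(t : ℕ)] x) := by
      intro a b hab
      by_contra hne
      rcases lt_or_gt_of_ne (fun h' : (a : ℕ) = (b : ℕ) => hne (Fin.ext h')) with h' | h'
      · exact hdist a b h' (by omega) hab
      · exact hdist b a h' (by omega) hab.symm
    have := Fintype.card_le_of_injective _ hinj
    simp at this; omega
  have hfix : ∀ m, (stp f)^[n₀ + m] x = (stp f)^[n₀] x := by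
    intro m
    rw [add_comm, Function.iterate_add_apply]
    exact iterate_fix hfind m
  have hcard : (stp f)^[Fintype.card V] x = (stp f)^[n₀] x := by
    conv_lhs => rw [show Fintype.card V = n₀ + (Fintype.card V - n₀) from by omega]
    exact hfix _
  refine ⟨by rw [hcard]; exact hfind, ?_⟩
  intro n hn
  have hle : n₀ ≤ n := Nat.find_min' h hn
  conv_lhs => rw [show n = n₀ + (n - n₀) from by omega]
  rw [hfix, hcard]

lemma rootOf_eq_of {f : V → Option V} {x y : V} {n : ℕ}
    (hr : (stp f)^[n] x = y) (hy : f y = none) : rootOf f x = y := by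
  have h : ∃ m, f ((stp f)^[m] x) = none := ⟨n, by rw [hr]; exact hy⟩
  have := (root_spec h).2 n (by rw [hr]; exact hy)
  rw [hr] at this
  exact this.symm

lemma rootOf_def (f : V → Option V) (x : V) :
    rootOf f x = (stp f)^[Fintype.card V] x := rfl

/-- termination property -/
def Term (f : V → Option V) : Prop := ∀ x, f ((stp f)^[Fintype.card V] x) = none

lemma isSCF_iff (E : V → V → Prop) (f : V → Option V) :
    IsSCF E f ↔ (∀ i j, f i = some j → E i j) ∧ Term f := by
  constructor
  · rintro ⟨he, h, hh⟩
    refine ⟨he, ?_⟩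
    intro x
    have key : ∀ m y, h y ≤ m → ∃ n, f ((stp f)^[n] y) = none := by
      intro m
      induction m with
      | zero =>
        intro y hy
        cases hf : f y with
        | none => exact ⟨0, hf⟩
        | some z => exact absurd (hh y z hf) (by omega)
      | succ m ih =>
        intro y hy
        cases hf : f y with
        | none => exact ⟨0, hf⟩
        | some z =>
          obtain ⟨n, hn⟩ := ih z (by have := hh y z hf; omega)
          exact ⟨n + 1, by rw [Function.iterate_succ_apply, stp_some hf]; exact hn⟩
    exact (root_spec (key (h x) x le_rfl)).1
  · rintro ⟨he, ht⟩
    refine ⟨he, fun y => Nat.find (⟨_, ht y⟩ : ∃ n, f ((stp f)^[n] y) = none), ?_⟩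
    intro a b hab
    show Nat.find (⟨_, ht b⟩ : ∃ n, f ((stp f)^[n] b) = none)
      < Nat.find (⟨_, ht a⟩ : ∃ n, f ((stp f)^[n] a) = none)
    have h0 : f ((stp f)^[Nat.find (⟨_, ht a⟩ : ∃ n, f ((stp f)^[n] a) = none)] a) = none :=
      Nat.find_spec (⟨_, ht a⟩ : ∃ n, f ((stp f)^[n] a) = none)
    set na := Nat.find (⟨_, ht a⟩ : ∃ n, f ((stp f)^[n] a) = none) with hna
    have hpos : na ≠ 0 := by
      intro hz
      rw [hz] at h0
      simp [hab] at h0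
    have hb : f ((stp f)^[na - 1] b) = none := by
      have heq : (stp f)^[na] a = (stp f)^[na - 1] b := by
        conv_lhs => rw [show na = (na - 1) + 1 from by omega]
        rw [Function.iterate_succ_apply, stp_some hab]
      rw [← heq]; exact h0
    have := Nat.find_min' (⟨_, ht b⟩ : ∃ n, f ((stp f)^[n] b) = none) hb
    omega

lemma no_cycle {f : V → Option V} {x : V} {n : ℕ}
    (hterm : f ((stp f)^[Fintype.card V] x) = none) (hn : 0 < n)
    (hcyc : (stp f)^[n] x = x) : f x = none := by
  have hfix : (stp f)^[n * Fintype.card V] x = x := by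
    rw [Function.iterate_mul]
    exact Function.iterate_fixed hcyc _
  have hge : Fintype.card V ≤ n * Fintype.card V :=
    Nat.le_mul_of_pos_left _ hn
  have h2 : (stp f)^[n * Fintype.card V] x = (stp f)^[Fintype.card V] x := by
    conv_lhs => rw [show n * Fintype.card V
      = (n * Fintype.card V - Fintype.card V) + Fintype.card V from by omega]
    rw [Function.iterate_add_apply]
    exact iterate_fix hterm _
  rw [hfix] at h2
  rw [h2]; exact hterm

/-- dichotomy: follow the `f`-chain; either it coincides with the `g`-chain forever
(reaching `g`'s root), or it first hits the disagreement set `D`. -/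
lemma reach_cases {f g : V → Option V} (D : Finset V) (hfg : ∀ z, z ∉ D → f z = g z)
    (x : V) (hgx : g ((stp g)^[Fintype.card V] x) = none) :
    (∃ m y, (stp f)^[m] x = y ∧ y ∉ D ∧ f y = none ∧ (stp g)^[Fintype.card V] x = y) ∨
      ∃ m w, (stp f)^[m] x = w ∧ w ∈ D ∧ (stp g)^[m] x = w := by
  classical
  by_cases h : ∃ t, (stp g)^[t] x ∈ D
  · set t₀ := Nat.find h with ht₀
    have hmem : (stp g)^[t₀] x ∈ D := Nat.find_spec h
    have hagree : (stp f)^[t₀] x = (stp g)^[t₀] x := by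
      apply iterate_agree
      intro t ht
      exact hfg _ (Nat.find_min h ht)
    exact Or.inr ⟨t₀, _, hagree, hmem, rfl⟩
  · push_neg at h
    left
    refine ⟨Fintype.card V, (stp g)^[Fintype.card V] x, ?_, h _, ?_, rfl⟩
    · exact iterate_agree (fun t _ => hfg _ (h t))
    · rw [hfg _ (h _)]; exact hgx

lemma root_of_reach {f : V → Option V} {x z : V} {m : ℕ}
    (h : (stp f)^[m] x = z) (hx : f ((stp f)^[Fintype.card V] x) = none) :
    (stp f)^[Fintype.card V] z = (stp f)^[Fintype.card V] x := by
  rw [← h, ← Function.iterate_add_apply, add_comm, Function.iterate_add_apply]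
  exact iterate_fix hx m

lemma mem_forests {E : V → V → Prop} {f : V → Option V} :
    f ∈ forests E ↔ IsSCF E f := by
  classical
  simp [forests]

lemma term_of_mem {E : V → V → Prop} {f : V → Option V} (h : f ∈ forests E) : Term f :=
  ((isSCF_iff E f).1 (mem_forests.1 h)).2

lemma edges_of_mem {E : V → V → Prop} {f : V → Option V} (h : f ∈ forests E) :
    ∀ a b, f a = some b → E a b :=
  ((isSCF_iff E f).1 (mem_forests.1 h)).1

lemma root_none {f : V → Option V} (h : Term f) (x : V) : f (rootOf f x) = none := h x

end SCFAux
set_option linter.unusedSectionVars false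
set_option maxHeartbeats 1000000

namespace SCFAux

variable {V : Type*} [Fintype V] [DecidableEq V]

lemma some_of_stp {f : V → Option V} {x y : V} (h : stp f x = y) (hxy : x ≠ y) :
    f x = some y := by
  cases hfx : f x with
  | none => rw [stp_none hfx] at h; exact absurd h hxy
  | some z => rw [stp_some hfx] at h; rw [h]

lemma iterate_period {F : V → V} {x : V} {p : ℕ} (h : F^[p] x = x) (hp : 0 < p) (m : ℕ) :
    F^[m] x = F^[m % p] x := by
  conv_lhs => rw [← Nat.mod_add_div m p]
  rw [Function.iterate_add_apply, Function.iterate_mul, Function.iterate_fixed h]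

/-- evaluation lemmas for the double update `f[k ↦ some j][j ↦ none]` -/
lemma upd2_j (f : V → Option V) (k j : V) :
    Function.update (Function.update f k (some j)) j none j = none := by
  simp

lemma upd2_k {f : V → Option V} {k j : V} (hkj : k ≠ j) :
    Function.update (Function.update f k (some j)) j none k = some j := by
  simp [Function.update_apply, hkj]

lemma upd2_other {f : V → Option V} {k j x : V} (hxj : x ≠ j) (hxk : x ≠ k) :
    Function.update (Function.update f k (some j)) j none x = f x := by
  simp [Function.update_apply, hxj, hxk]

lemma cycle_contra {f₁ f₂ : V → Option V} {j c' k₁ k₂ : V}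
    (hT1 : Term f₁) (hk : k₁ ≠ k₂) (hjk1 : j ≠ k₁) (hjk2 : j ≠ k₂)
    (h12 : ∀ x, x ≠ k₁ → x ≠ k₂ → f₁ x = f₂ x)
    (hf1j : f₁ j = some c')
    (h2k1 : f₂ k₁ = some j) (h1k2 : f₁ k₂ = some j)
    {n : ℕ} (hreach : (stp f₂)^[n] c' = k₂) : False := by
  classical
  have hf2j : f₂ j = some c' := by rw [← h12 j hjk1 hjk2]; exact hf1j
  have hex : ∃ t, (stp f₂)^[t] j = k₂ :=
    ⟨n + 1, by rw [Function.iterate_succ_apply, stp_some hf2j]; exact hreach⟩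
  set t₀ := Nat.find hex with ht₀def
  have ht₀ : (stp f₂)^[t₀] j = k₂ := Nat.find_spec hex
  have hnodes : ∀ t < t₀, (stp f₂)^[t] j ≠ k₂ := fun t ht hh => Nat.find_min hex ht hh
  set u := Function.update f₂ k₂ (some j) with hu
  have hu_k₂ : u k₂ = some j := Function.update_self _ _ _
  have hu_off : ∀ x, x ≠ k₂ → u x = f₂ x := fun x hx => Function.update_of_ne hx _ _
  have hchain_u : (stp u)^[t₀] j = k₂ := by
    rw [← ht₀]; exact iterate_agree (fun t ht => hu_off _ (hnodes t ht))
  have hcyc_u : (stp u)^[t₀ + 1] j = j := by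
    rw [Function.iterate_succ_apply', hchain_u, stp_some hu_k₂]
  by_cases hB : ∃ s, s ≤ t₀ ∧ (stp u)^[s] j = k₁
  · obtain ⟨s, hs, hsk⟩ := hB
    have hslt : s < t₀ := by
      rcases eq_or_lt_of_le hs with h | h
      · rw [h, hchain_u] at hsk; exact absurd hsk.symm hk
      · exact h
    have hu_k₁ : u k₁ = some j := by rw [hu_off _ hk]; exact h2k1
    have hper_u : (stp u)^[s + 1] j = j := by
      rw [Function.iterate_succ_apply', hsk, stp_some hu_k₁]
    have hagree : ∀ t, t ≤ t₀ → (stp u)^[t] j = (stp f₂)^[t] j := fun t ht =>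
      iterate_agree (fun r hr => hu_off _ (hnodes r (lt_of_lt_of_le hr ht)))
    have hper : (stp f₂)^[s + 1] j = j := by
      rw [← hagree (s + 1) (by omega)]; exact hper_u
    have hmod : (stp f₂)^[t₀ % (s + 1)] j = k₂ := by
      rw [← iterate_period hper (by omega) t₀]; exact ht₀
    have hlt : t₀ % (s + 1) < t₀ := by
      have := Nat.mod_lt t₀ (show 0 < s + 1 by omega); omega
    exact Nat.find_min hex hlt hmod
  · push_neg at hB
    have h1u : ∀ x, x ≠ k₁ → f₁ x = u x := by
      intro x hx
      by_cases hx2 : x = k₂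
      · rw [hx2, hu_k₂]; exact h1k2
      · rw [hu_off _ hx2]; exact h12 x hx hx2
    have hcyc1 : (stp f₁)^[t₀ + 1] j = j := by
      rw [iterate_agree (fun t ht => h1u _ (hB t (by omega)))]
      exact hcyc_u
    have := no_cycle (hT1 j) (by omega) hcyc1
    rw [hf1j] at this; exact nomatch this

lemma inj_half {f₁ f₂ : V → Option V} {j k₁ k₂ : V}
    (hT1 : Term f₁) (hT2 : Term f₂) (hk : k₁ ≠ k₂) (hjk1 : j ≠ k₁) (hjk2 : j ≠ k₂)
    (h12 : ∀ x, x ≠ k₁ → x ≠ k₂ → f₁ x = f₂ x)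
    (h1k1 : f₁ k₁ = none) (h2k2 : f₂ k₂ = none)
    (h2k1 : f₂ k₁ = some j) (h1k2 : f₁ k₂ = some j)
    (hjeq : f₁ j = f₂ j)
    (hrw : (stp f₂)^[Fintype.card V] k₁ = k₂) : False := by
  cases hcj : f₂ j with
  | none =>
    have h1 : (stp f₂)^[1] k₁ = j := by
      rw [Function.iterate_one]; exact stp_some h2k1
    have := rootOf_eq_of h1 hcj
    rw [rootOf_def, hrw] at this
    exact hjk2 this.symm
  | some c' =>
    have h2 : (stp f₂)^[2] k₁ = c' := by
      show stp f₂ (stp f₂ ((stp f₂)^[0] k₁)) = c'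
      rw [Function.iterate_zero_apply, stp_some h2k1, stp_some hcj]
    have hcc : (stp f₂)^[Fintype.card V] c' = k₂ := by
      have e1 : (stp f₂)^[Fintype.card V + 2] k₁ = (stp f₂)^[Fintype.card V] c' := by
        rw [Function.iterate_add_apply, h2]
      have e2 : (stp f₂)^[2 + Fintype.card V] k₁ = k₂ := by
        rw [Function.iterate_add_apply, hrw]
        exact iterate_fix h2k2 2
      rw [← e1, add_comm]; exact e2
    exact cycle_contra hT1 hk hjk1 hjk2 h12 (hjeq.trans hcj) h2k1 h1k2 hcc

lemma inj_main {E : V → V → Prop} [DecidableRel E] (hE : ∀ v, ¬ E v v) {i j : V}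
    {f₁ f₂ : V → Option V}
    (h1 : f₁ ∈ forests E) (h2 : f₂ ∈ forests E)
    (e1 : E (rootOf f₁ i) j) (e2 : E (rootOf f₂ i) j)
    (hg : Function.update (Function.update f₁ (rootOf f₁ i) (some j)) j none
        = Function.update (Function.update f₂ (rootOf f₂ i) (some j)) j none)
    (hc : f₁ j = f₂ j) : f₁ = f₂ := by
  classical
  set k₁ := rootOf f₁ i with hk₁
  set k₂ := rootOf f₂ i with hk₂
  have hT1 : Term f₁ := term_of_mem h1
  have hT2 : Term f₂ := term_of_mem h2
  have hjk1 : j ≠ k₁ := fun h => hE j (h ▸ e1)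
  have hjk2 : j ≠ k₂ := fun h => hE j (h ▸ e2)
  have h1k1 : f₁ k₁ = none := root_none hT1 i
  have h2k2 : f₂ k₂ = none := root_none hT2 i
  have h12 : ∀ x, x ≠ k₁ → x ≠ k₂ → f₁ x = f₂ x := by
    intro x hx1 hx2
    by_cases hxj : x = j
    · rw [hxj]; exact hc
    · have := congrFun hg x
      rwa [upd2_other hxj hx1, upd2_other hxj hx2] at this
  have hkk : k₁ = k₂ := by
    by_contra hk
    have h2k1 : f₂ k₁ = some j := by
      have := congrFun hg k₁
      rw [upd2_k (Ne.symm hjk1), upd2_other (Ne.symm hjk1) hk] at this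
      exact this.symm
    have h1k2 : f₁ k₂ = some j := by
      have := congrFun hg k₂
      rw [upd2_k (Ne.symm hjk2), upd2_other (Ne.symm hjk2) (Ne.symm hk)] at this
      exact this
    rcases reach_cases ({k₁, k₂} : Finset V) (fun z hz => by
        simp only [Finset.mem_insert, Finset.mem_singleton] at hz
        push_neg at hz
        exact (h12 z hz.1 hz.2).symm) i (hT1 i) with
      ⟨m, y, hm, hy, hfy, hend⟩ | ⟨m, w, hmf₂, hw, hmf₁⟩
    · have hyk : y = k₁ := by rw [hk₁, rootOf_def, hend]
      exact hy (by rw [hyk]; exact Finset.mem_insert_self _ _)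
    · rcases Finset.mem_insert.1 hw with hw1 | hw2
      · rw [hw1] at hmf₂ hmf₁
        have hrw : (stp f₂)^[Fintype.card V] k₁ = k₂ := by
          have := root_of_reach hmf₂ (hT2 i)
          rw [this, ← rootOf_def, ← hk₂]
        exact inj_half hT1 hT2 hk hjk1 hjk2 h12 h1k1 h2k2 h2k1 h1k2 hc hrw
      · rw [Finset.mem_singleton] at hw2
        rw [hw2] at hmf₂ hmf₁
        have hrw : (stp f₁)^[Fintype.card V] k₂ = k₁ := by
          have := root_of_reach hmf₁ (hT1 i)
          rw [this, ← rootOf_def, ← hk₁]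
        exact inj_half hT2 hT1 (Ne.symm hk) hjk2 hjk1
          (fun x hx2 hx1 => (h12 x hx1 hx2).symm) h2k2 h1k1 h1k2 h2k1 hc.symm hrw
  funext x
  by_cases hx1 : x = k₁
  · rw [hx1, h1k1, show f₂ k₁ = none from hkk ▸ h2k2]
  · by_cases hx2 : x = k₂
    · rw [hx2, show f₁ k₂ = none from hkk ▸ h1k1, h2k2]
    · exact h12 x hx1 hx2

end SCFAux
namespace SCFAux

variable {V : Type*} [Fintype V] [DecidableEq V]

lemma forward {E : V → V → Prop} [DecidableRel E] (hE : ∀ v, ¬ E v v) {i j : V}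
    {f : V → Option V} (hf : f ∈ forests E) (hroot : E (rootOf f i) j) :
    Function.update (Function.update f (rootOf f i) (some j)) j none ∈ forests E ∧
      rootOf (Function.update (Function.update f (rootOf f i) (some j)) j none) i = j := by
  classical
  set k := rootOf f i with hk
  set g := Function.update (Function.update f k (some j)) j none with hgdef
  have hT : Term f := term_of_mem hf
  have hjk : j ≠ k := fun h => hE j (h ▸ hroot)
  have hfk : f k = none := root_none hT i
  have hgj : g j = none := upd2_j f k j
  have hgk : g k = some j := upd2_k (Ne.symm hjk)
  have hgo : ∀ x, x ∉ ({j, k} : Finset V) → g x = f x := by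
    intro x hx
    simp only [Finset.mem_insert, Finset.mem_singleton] at hx
    push_neg at hx
    exact upd2_other hx.1 hx.2
  have hterm : Term g := by
    intro x
    rcases reach_cases ({j, k} : Finset V) hgo x (hT x) with
      ⟨m, y, hm, hy, hgy, _⟩ | ⟨m, w, hmg, hw, _⟩
    · exact (root_spec ⟨m, by rw [hm]; exact hgy⟩).1
    · rcases Finset.mem_insert.1 hw with hw1 | hw2
      · refine (root_spec ⟨m, ?_⟩).1
        rw [hmg, hw1]; exact hgj
      · rw [Finset.mem_singleton] at hw2
        refine (root_spec ⟨m + 1, ?_⟩).1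
        rw [Function.iterate_succ_apply', hmg, hw2, stp_some hgk]
        exact hgj
  have hedges : ∀ a b, g a = some b → E a b := by
    intro a b hab
    by_cases haj : a = j
    · rw [haj, hgj] at hab; exact nomatch hab
    · by_cases hak : a = k
      · rw [hak, hgk] at hab
        rw [hak, (Option.some_injective V hab.symm ▸ rfl : b = j)]
        exact hroot
      · exact edges_of_mem hf a b (by rw [← hgo a (by simp [haj, hak])]; exact hab)
  have hrootg : rootOf g i = j := by
    rcases reach_cases ({j, k} : Finset V) hgo i (hT i) with
      ⟨m, y, hm, hy, hgy, hend⟩ | ⟨m, w, hmg, hw, _⟩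
    · have : y = k := by rw [hk, rootOf_def, hend]
      exact absurd (by rw [this]; simp : y ∈ ({j, k} : Finset V)) hy
    · rcases Finset.mem_insert.1 hw with hw1 | hw2
      · exact rootOf_eq_of (hw1 ▸ hmg) hgj
      · rw [Finset.mem_singleton] at hw2
        refine rootOf_eq_of (n := m + 1) ?_ hgj
        rw [Function.iterate_succ_apply', hmg, hw2, stp_some hgk]
  exact ⟨mem_forests.2 ((isSCF_iff E g).2 ⟨hedges, hterm⟩), hrootg⟩

end SCFAux
namespace SCFAux

variable {V : Type*} [Fintype V] [DecidableEq V]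

lemma surj_main {E : V → V → Prop} [DecidableRel E] (hE : ∀ v, ¬ E v v) {i j : V}
    (hij : i ≠ j) {g : V → Option V} (hg : g ∈ forests E) (hrg : rootOf g i = j)
    (c : Option V) (hc : c = none ∨ ∃ c', c = some c' ∧ E j c') :
    ∃ f ∈ forests E, E (rootOf f i) j ∧
      Function.update (Function.update f (rootOf f i) (some j)) j none = g ∧ f j = c := by
  classical
  have hTg : Term g := term_of_mem hg
  have hgj : g j = none := by rw [← hrg]; exact root_none hTg i
  have hex : ∃ n, (stp g)^[n] i = j := ⟨Fintype.card V, by rw [← rootOf_def]; exact hrg⟩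
  set n₀ := Nat.find hex with hn₀def
  have hn₀ : (stp g)^[n₀] i = j := Nat.find_spec hex
  have hpos : 0 < n₀ := by
    rcases Nat.eq_zero_or_pos n₀ with h | h
    · rw [h] at hn₀; exact absurd hn₀ hij
    · exact h
  set m := (stp g)^[n₀ - 1] i with hmdef
  have hms : stp g m = j := by
    have h1 : (stp g)^[(n₀ - 1) + 1] i = j := by
      rw [show n₀ - 1 + 1 = n₀ from by omega]; exact hn₀
    rw [Function.iterate_succ_apply'] at h1
    exact h1
  have hmj : m ≠ j := fun h => Nat.find_min hex (show n₀ - 1 < n₀ by omega) h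
  have hgm : g m = some j := some_of_stp hms hmj
  have hEmj : E m j := edges_of_mem hg m j hgm
  have hchain_ne_j : ∀ t < n₀, (stp g)^[t] i ≠ j := fun t ht => Nat.find_min hex ht
  have hchain_ne_m : ∀ t < n₀ - 1, (stp g)^[t] i ≠ m := by
    intro t ht h
    have : (stp g)^[t + 1] i = j := by
      rw [Function.iterate_succ_apply', h]; exact hms
    exact Nat.find_min hex (by omega) this
  rcases hc with hcn | ⟨c', hcs, hEjc'⟩
  · -- c = none
    set f := Function.update g m none with hfdef
    have hf_m : f m = none := Function.update_self _ _ _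
    have hf_off : ∀ x, x ≠ m → f x = g x := fun x hx => Function.update_of_ne hx _ _
    have hf_j : f j = none := by rw [hf_off j (Ne.symm hmj)]; exact hgj
    have hreach : (stp f)^[n₀ - 1] i = m := by
      rw [hmdef]
      exact iterate_agree (fun t ht => hf_off _ (hchain_ne_m t ht))
    have hrootf : rootOf f i = m := rootOf_eq_of hreach hf_m
    have hTf : Term f := by
      intro x
      rcases reach_cases ({m} : Finset V)
          (fun z hz => hf_off z (by simpa using hz)) x (hTg x) with
        ⟨mm, y, hmy, hy, hfy, _⟩ | ⟨mm, w, hmw, hw, _⟩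
      · exact (root_spec ⟨mm, by rw [hmy]; exact hfy⟩).1
      · rw [Finset.mem_singleton] at hw
        exact (root_spec ⟨mm, by rw [hmw, hw]; exact hf_m⟩).1
    have hedges : ∀ a b, f a = some b → E a b := by
      intro a b hab
      by_cases ham : a = m
      · rw [ham, hf_m] at hab; exact nomatch hab
      · exact edges_of_mem hg a b (by rw [← hf_off a ham]; exact hab)
    refine ⟨f, mem_forests.2 ((isSCF_iff E f).2 ⟨hedges, hTf⟩), by rw [hrootf]; exact hEmj,
      ?_, by rw [hf_j, hcn]⟩
    rw [hrootf]
    funext x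
    by_cases hxj : x = j
    · rw [hxj, upd2_j]; exact hgj.symm
    · by_cases hxm : x = m
      · rw [hxm, upd2_k hmj]; exact hgm.symm
      · rw [upd2_other hxj hxm]; exact hf_off x hxm
  · -- c = some c'
    have hc'j : c' ≠ j := fun h => hE j (h ▸ hEjc')
    set u := Function.update g j (some c') with hudef
    have hu_j : u j = some c' := Function.update_self _ _ _
    have hu_off : ∀ x, x ≠ j → u x = g x := fun x hx => Function.update_of_ne hx _ _
    by_cases hcyc : ∃ t, (stp u)^[t + 1] j = j
    · -- cycle case
      set t₀ := Nat.find hcyc with ht₀def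
      have hspec : (stp u)^[t₀ + 1] j = j := Nat.find_spec hcyc
      set k := (stp u)^[t₀] j with hkdef
      have hstep : stp u k = j := by
        have h1 := hspec
        rw [Function.iterate_succ_apply'] at h1
        exact h1
      have hkj : k ≠ j := by
        intro h
        rw [h, stp_some hu_j] at hstep
        exact hc'j hstep
      have hu_k : u k = some j := some_of_stp hstep hkj
      have hg_k : g k = some j := by rw [← hu_off k hkj]; exact hu_k
      have hEkj : E k j := edges_of_mem hg k j hg_k
      have hcyc_nodes : ∀ s < t₀, (stp u)^[s] j ≠ k := by
        intro s hs h
        exact Nat.find_min hcyc hs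
          (by rw [Function.iterate_succ_apply', h]; exact hstep)
      set f := Function.update u k none with hfdef
      have hf_k : f k = none := Function.update_self _ _ _
      have hf_off_u : ∀ x, x ≠ k → f x = u x := fun x hx => Function.update_of_ne hx _ _
      have hf_j : f j = some c' := by rw [hf_off_u j (Ne.symm hkj)]; exact hu_j
      have hf_off_g : ∀ x, x ∉ ({j, k} : Finset V) → f x = g x := by
        intro x hx
        simp only [Finset.mem_insert, Finset.mem_singleton] at hx
        push_neg at hx
        rw [hf_off_u x hx.2]; exact hu_off x hx.1
      have hchainj : (stp f)^[t₀] j = k := by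
        rw [hkdef]
        exact iterate_agree (fun s hs => hf_off_u _ (hcyc_nodes s hs))
      have hroot : rootOf f i = k := by
        by_cases hkm : k = m
        · refine rootOf_eq_of (n := n₀ - 1) ?_ hf_k
          have : (stp f)^[n₀ - 1] i = m := by
            rw [hmdef]
            refine iterate_agree (fun t ht => hf_off_g _ ?_)
            simp only [Finset.mem_insert, Finset.mem_singleton]
            push_neg
            exact ⟨hchain_ne_j t (by omega), fun h => hchain_ne_m t ht (h.trans hkm)⟩
          rw [this, hkm]
        · have hreachj : (stp f)^[n₀] i = j := by
            have : (stp f)^[n₀] i = (stp g)^[n₀] i := by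
              refine iterate_agree (fun t ht => hf_off_g _ ?_)
              simp only [Finset.mem_insert, Finset.mem_singleton]
              push_neg
              refine ⟨hchain_ne_j t ht, ?_⟩
              intro h
              have htj : (stp g)^[t + 1] i = j := by
                rw [Function.iterate_succ_apply', h, stp_some hg_k]
              have ht1 : n₀ ≤ t + 1 := Nat.find_le htj
              have : t = n₀ - 1 := by omega
              exact hkm (by rw [← h, this])
            rw [this]; exact hn₀
          refine rootOf_eq_of (n := t₀ + n₀) ?_ hf_k
          rw [Function.iterate_add_apply, hreachj]
          exact hchainj
      have hTf : Term f := by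
        intro x
        rcases reach_cases ({j, k} : Finset V) hf_off_g x (hTg x) with
          ⟨mm, y, hmy, hy, hfy, _⟩ | ⟨mm, w, hmw, hw, _⟩
        · exact (root_spec ⟨mm, by rw [hmy]; exact hfy⟩).1
        · rcases Finset.mem_insert.1 hw with hw1 | hw2
          · refine (root_spec ⟨t₀ + mm, ?_⟩).1
            rw [Function.iterate_add_apply, hmw, hw1, hchainj]
            exact hf_k
          · rw [Finset.mem_singleton] at hw2
            exact (root_spec ⟨mm, by rw [hmw, hw2]; exact hf_k⟩).1
      have hedges : ∀ a b, f a = some b → E a b := by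
        intro a b hab
        by_cases hak : a = k
        · rw [hak, hf_k] at hab; exact nomatch hab
        · by_cases haj : a = j
          · rw [haj, hf_j] at hab
            rw [haj, show b = c' from Option.some_injective V hab.symm]
            exact hEjc'
          · exact edges_of_mem hg a b (by rw [← hf_off_g a (by simp [haj, hak])]; exact hab)
      refine ⟨f, mem_forests.2 ((isSCF_iff E f).2 ⟨hedges, hTf⟩), by rw [hroot]; exact hEkj,
        ?_, by rw [hf_j, hcs]⟩
      rw [hroot]
      funext x
      by_cases hxj : x = j
      · rw [hxj, upd2_j]; exact hgj.symm
      · by_cases hxk : x = k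
        · rw [hxk, upd2_k hkj]; exact hg_k.symm
        · rw [upd2_other hxj hxk]; exact hf_off_g x (by simp [hxj, hxk])
    · -- no-cycle case
      push_neg at hcyc
      set f := Function.update u m none with hfdef
      have hf_m : f m = none := Function.update_self _ _ _
      have hf_off_u : ∀ x, x ≠ m → f x = u x := fun x hx => Function.update_of_ne hx _ _
      have hf_j : f j = some c' := by rw [hf_off_u j (Ne.symm hmj)]; exact hu_j
      have hf_off_g : ∀ x, x ∉ ({j, m} : Finset V) → f x = g x := by
        intro x hx
        simp only [Finset.mem_insert, Finset.mem_singleton] at hx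
        push_neg at hx
        rw [hf_off_u x hx.2]; exact hu_off x hx.1
      have hreach : (stp f)^[n₀ - 1] i = m := by
        rw [hmdef]
        refine iterate_agree (fun t ht => hf_off_g _ ?_)
        simp only [Finset.mem_insert, Finset.mem_singleton]
        push_neg
        exact ⟨hchain_ne_j t (by omega), hchain_ne_m t ht⟩
      have hroot : rootOf f i = m := rootOf_eq_of hreach hf_m
      have hnoj : ∀ s, (stp g)^[s] c' ≠ j := by
        intro s hsj
        have hexj : ∃ s, (stp g)^[s] c' = j := ⟨s, hsj⟩
        set s₀ := Nat.find hexj with hs₀def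
        have hs₀ : (stp g)^[s₀] c' = j := Nat.find_spec hexj
        have hagree : (stp u)^[s₀] c' = (stp g)^[s₀] c' :=
          iterate_agree (fun t ht => hu_off _ (Nat.find_min hexj ht))
        have : (stp u)^[s₀ + 1] j = j := by
          rw [Function.iterate_succ_apply, stp_some hu_j, hagree]
          exact hs₀
        exact hcyc s₀ this
      have hTf : Term f := by
        intro x
        rcases reach_cases ({j, m} : Finset V) hf_off_g x (hTg x) with
          ⟨mm, y, hmy, hy, hfy, _⟩ | ⟨mm, w, hmw, hw, _⟩
        · exact (root_spec ⟨mm, by rw [hmy]; exact hfy⟩).1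
        · rcases Finset.mem_insert.1 hw with hw1 | hw2
          · -- w = j : continue from c'
            have hxc' : (stp f)^[mm + 1] x = c' := by
              rw [Function.iterate_succ_apply', hmw, hw1, stp_some hf_j]
            rcases reach_cases ({j, m} : Finset V) hf_off_g c' (hTg c') with
              ⟨m2, y2, h2, hy2, hfy2, _⟩ | ⟨m2, w2, h2f, hw2, h2g⟩
            · refine (root_spec ⟨m2 + (mm + 1), ?_⟩).1
              rw [Function.iterate_add_apply, hxc', h2]
              exact hfy2
            · rcases Finset.mem_insert.1 hw2 with hw21 | hw22
              · exact absurd (hw21 ▸ h2g) (hnoj m2)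
              · rw [Finset.mem_singleton] at hw22
                refine (root_spec ⟨m2 + (mm + 1), ?_⟩).1
                rw [Function.iterate_add_apply, hxc', h2f, hw22]
                exact hf_m
          · rw [Finset.mem_singleton] at hw2
            exact (root_spec ⟨mm, by rw [hmw, hw2]; exact hf_m⟩).1
      have hedges : ∀ a b, f a = some b → E a b := by
        intro a b hab
        by_cases ham : a = m
        · rw [ham, hf_m] at hab; exact nomatch hab
        · by_cases haj : a = j
          · rw [haj, hf_j] at hab
            rw [haj, show b = c' from Option.some_injective V hab.symm]
            exact hEjc'
          · exact edges_of_mem hg a b (by rw [← hf_off_g a (by simp [haj, ham])]; exact hab)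
      refine ⟨f, mem_forests.2 ((isSCF_iff E f).2 ⟨hedges, hTf⟩), by rw [hroot]; exact hEmj,
        ?_, by rw [hf_j, hcs]⟩
      rw [hroot]
      funext x
      by_cases hxj : x = j
      · rw [hxj, upd2_j]; exact hgj.symm
      · by_cases hxm : x = m
        · rw [hxm, upd2_k hmj]; exact hgm.symm
        · rw [upd2_other hxj hxm]; exact hf_off_g x (by simp [hxj, hxm])

end SCFAux
namespace SCFAux

variable {V : Type*} [Fintype V] [DecidableEq V]

open scoped Classical in
noncomputable def Cset (E : V → V → Prop) [DecidableRel E] (j : V) : Finset (Option V) :=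
  insert none ((Finset.univ.filter (fun l => E j l)).image some)

lemma mem_Cset {E : V → V → Prop} [DecidableRel E] {j : V} {c : Option V} :
    c ∈ Cset E j ↔ c = none ∨ ∃ c', c = some c' ∧ E j c' := by
  simp [Cset]
  tauto

lemma card_Cset (E : V → V → Prop) [DecidableRel E] (j : V) :
    (Cset E j).card = 1 + outDeg E j := by
  rw [Cset, Finset.card_insert_of_notMem (by simp),
    Finset.card_image_of_injective _ (Option.some_injective V), outDeg]
  omega

open scoped Classical in
lemma key_card (E : V → V → Prop) [DecidableRel E] (hE : ∀ v, ¬ E v v) (i j : V)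
    (hij : i ≠ j) :
    ((forests E).filter (fun f => E (rootOf f i) j)).card
      = (1 + outDeg E j) * ((forests E).filter (fun f => rootOf f i = j)).card := by
  have hcard := Finset.card_bij
    (s := (forests E).filter (fun f => E (rootOf f i) j))
    (t := ((forests E).filter (fun f => rootOf f i = j)) ×ˢ Cset E j)
    (fun f _ => (Function.update (Function.update f (rootOf f i) (some j)) j none, f j))
    (by
      intro f hf
      rw [Finset.mem_filter] at hf
      obtain ⟨hf1, hf2⟩ := hf
      obtain ⟨hmem, hroot⟩ := forward hE hf1 hf2
      simp only [Finset.mem_product, Finset.mem_filter, mem_Cset]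
      refine ⟨⟨hmem, hroot⟩, ?_⟩
      cases hfj : f j with
      | none => exact Or.inl rfl
      | some l => exact Or.inr ⟨l, rfl, edges_of_mem hf1 j l hfj⟩)
    (by
      intro f₁ hf₁ f₂ hf₂ heq
      rw [Finset.mem_filter] at hf₁ hf₂
      rw [Prod.mk.injEq] at heq
      exact inj_main hE hf₁.1 hf₂.1 hf₁.2 hf₂.2 heq.1 heq.2)
    (by
      rintro ⟨g, c⟩ hb
      rw [Finset.mem_product, Finset.mem_filter] at hb
      obtain ⟨⟨hgmem, hgroot⟩, hcmem⟩ := hb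
      obtain ⟨f, hfmem, hfE, hupd, hfj⟩ :=
        surj_main hE hij hgmem hgroot c (mem_Cset.1 hcmem)
      exact ⟨f, Finset.mem_filter.2 ⟨hfmem, hfE⟩, by rw [Prod.mk.injEq]; exact ⟨hupd, hfj⟩⟩)
  rw [hcard, Finset.card_product, card_Cset, Nat.mul_comm]

lemma forests_nonempty (E : V → V → Prop) : (forests E).Nonempty :=
  ⟨fun _ => none, mem_forests.2 ⟨fun a b h => (nomatch h),
    fun _ => 0, fun a b h => (nomatch h)⟩⟩

open scoped Classical in
lemma sum_inNbrs_card (E : V → V → Prop) [DecidableRel E] (i j : V) :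
    ∑ k ∈ inNbrs E j, ((forests E).filter (fun f => rootOf f i = k)).card
      = ((forests E).filter (fun f => E (rootOf f i) j)).card := by
  simp only [Finset.card_filter]
  rw [Finset.sum_comm]
  apply Finset.sum_congr rfl
  intro f _
  rw [Finset.sum_ite_eq]
  simp [inNbrs]

end SCFAux

open SCFAux

/-- for distinct i ≠ j and α ∈ ℝ, the combined estimator
ω̄_ij(φ,α) = α·ω̂_ij(φ) + (1−α)·ω̃_ij(φ) is unbiased for ω_ij, its variance
equals (ω_ij(2+d_j)/(1+d_j))·(α − 1/(2+d_j))² + ω_ij/(2+d_j) − ω_ij², and it is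
minimized at α = 1/(2+d_j) with minimum value ω_ij/(2+d_j) − ω_ij². -/
theorem combinedEst_unbiased_variance_minimized {V : Type*} [Fintype V] [DecidableEq V]
    (E : V → V → Prop) [DecidableRel E] (hE : ∀ i, ¬ E i i)
    (i j : V) (hij : i ≠ j) :
    (∀ α : ℝ,
      expVal E (fun f => α * indEst i j f +
          (1 - α) * ((1 / (1 + (outDeg E j : ℝ))) * ∑ k ∈ inNbrs E j, indEst i k f))
        = fOmega E i j) ∧
    (∀ α : ℝ,
      varVal E (fun f => α * indEst i j f +
          (1 - α) * ((1 / (1 + (outDeg E j : ℝ))) * ∑ k ∈ inNbrs E j, indEst i k f))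
        = (fOmega E i j * (2 + (outDeg E j : ℝ)) / (1 + (outDeg E j : ℝ))) *
            (α - 1 / (2 + (outDeg E j : ℝ))) ^ 2 +
          fOmega E i j / (2 + (outDeg E j : ℝ)) - (fOmega E i j) ^ 2) ∧
    varVal E (fun f => (1 / (2 + (outDeg E j : ℝ))) * indEst i j f +
          (1 - 1 / (2 + (outDeg E j : ℝ))) *
            ((1 / (1 + (outDeg E j : ℝ))) * ∑ k ∈ inNbrs E j, indEst i k f))
      = fOmega E i j / (2 + (outDeg E j : ℝ)) - (fOmega E i j) ^ 2 ∧
    (∀ α : ℝ,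
      varVal E (fun f => (1 / (2 + (outDeg E j : ℝ))) * indEst i j f +
          (1 - 1 / (2 + (outDeg E j : ℝ))) *
            ((1 / (1 + (outDeg E j : ℝ))) * ∑ k ∈ inNbrs E j, indEst i k f))
        ≤ varVal E (fun f => α * indEst i j f +
          (1 - α) * ((1 / (1 + (outDeg E j : ℝ))) * ∑ k ∈ inNbrs E j, indEst i k f))) := by
  classical
  set d : ℝ := (outDeg E j : ℝ) with hd
  have hd0 : (0 : ℝ) ≤ d := Nat.cast_nonneg _
  have h1d : (1 : ℝ) + d ≠ 0 := by positivity
  have h2d : (2 : ℝ) + d ≠ 0 := by positivity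
  have hNpos : 0 < (forests E).card := Finset.card_pos.2 (forests_nonempty E)
  set N : ℝ := ((forests E).card : ℝ) with hN
  have hN0 : N ≠ 0 := by
    rw [hN]; exact_mod_cast Nat.pos_iff_ne_zero.1 hNpos
  set A : ℕ := ((forests E).filter (fun f => rootOf f i = j)).card with hA
  have hω : fOmega E i j = (A : ℝ) / N := rfl
  -- pointwise: the in-neighbour sum is an indicator
  have hYpt : ∀ f : V → Option V,
      (∑ k ∈ inNbrs E j, indEst i k f) = if E (rootOf f i) j then (1 : ℝ) else 0 := by
    intro f
    unfold indEst
    rw [Finset.sum_ite_eq]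
    simp [inNbrs]
  -- rewrite estimator functions
  have hfun : ∀ α : ℝ,
      (fun f => α * indEst i j f +
          (1 - α) * ((1 / (1 + d)) * ∑ k ∈ inNbrs E j, indEst i k f))
        = fun f => α * indEst i j f +
          (1 - α) * ((1 / (1 + d)) * if E (rootOf f i) j then (1 : ℝ) else 0) := by
    intro α; funext f; rw [hYpt]
  -- sums of indicators
  have hsum_ind : ∑ f ∈ forests E, indEst i j f = (A : ℝ) := by
    unfold indEst
    rw [Finset.sum_boole, hA]
  have hsum_Y : ∑ f ∈ forests E, (if E (rootOf f i) j then (1 : ℝ) else 0)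
      = (1 + d) * (A : ℝ) := by
    rw [Finset.sum_boole]
    have hk := key_card E hE i j hij
    have hs : ((forests E).filter (fun f => E (rootOf f i) j)).card
        = (1 + outDeg E j) * A := by rw [hA]; exact_mod_cast hk
    rw [show (Finset.filter (fun f => E (rootOf f i) j) (forests E)).card
        = (1 + outDeg E j) * A from hs]
    push_cast [hd]
    ring
  -- expectation of the combined estimator
  have hsumX : ∀ α : ℝ,
      (∑ f ∈ forests E, (α * indEst i j f +
          (1 - α) * ((1 / (1 + d)) * if E (rootOf f i) j then (1 : ℝ) else 0)))
        = α * (A : ℝ) + (1 - α) * (1 / (1 + d)) * ((1 + d) * (A : ℝ)) := by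
    intro α
    rw [Finset.sum_add_distrib, ← Finset.mul_sum, hsum_ind]
    have hstep : ∑ f ∈ forests E, (1 - α) * ((1 / (1 + d)) * if E (rootOf f i) j then (1 : ℝ) else 0)
        = ((1 - α) * (1 / (1 + d))) * ∑ f ∈ forests E, (if E (rootOf f i) j then (1 : ℝ) else 0) := by
      rw [Finset.mul_sum]
      exact Finset.sum_congr rfl (fun f _ => by ring)
    rw [hstep, hsum_Y]
  -- pointwise square
  have hsq : ∀ (α : ℝ) (f : V → Option V),
      (α * indEst i j f +
          (1 - α) * ((1 / (1 + d)) * if E (rootOf f i) j then (1 : ℝ) else 0)) ^ 2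
        = α ^ 2 * indEst i j f +
          ((1 - α) * (1 / (1 + d))) ^ 2 * (if E (rootOf f i) j then (1 : ℝ) else 0) := by
    intro α f
    unfold indEst
    by_cases h : rootOf f i = j
    · have hEjj : ¬ E (rootOf f i) j := by rw [h]; exact hE j
      rw [if_pos h, if_neg hEjj]
      ring
    · by_cases h2 : E (rootOf f i) j
      · rw [if_neg h, if_pos h2]
        ring
      · rw [if_neg h, if_neg h2]
        ring
  have hsumX2 : ∀ α : ℝ,
      (∑ f ∈ forests E, (α * indEst i j f +
          (1 - α) * ((1 / (1 + d)) * if E (rootOf f i) j then (1 : ℝ) else 0)) ^ 2)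
        = α ^ 2 * (A : ℝ) + ((1 - α) * (1 / (1 + d))) ^ 2 * ((1 + d) * (A : ℝ)) := by
    intro α
    calc (∑ f ∈ forests E, (α * indEst i j f +
          (1 - α) * ((1 / (1 + d)) * if E (rootOf f i) j then (1 : ℝ) else 0)) ^ 2)
        = ∑ f ∈ forests E, (α ^ 2 * indEst i j f +
            ((1 - α) * (1 / (1 + d))) ^ 2 * (if E (rootOf f i) j then (1 : ℝ) else 0)) := by
          exact Finset.sum_congr rfl (fun f _ => hsq α f)
      _ = α ^ 2 * (A : ℝ) + ((1 - α) * (1 / (1 + d))) ^ 2 * ((1 + d) * (A : ℝ)) := by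
          rw [Finset.sum_add_distrib, ← Finset.mul_sum, ← Finset.mul_sum, hsum_ind, hsum_Y]
  -- variance identity
  have hvar : ∀ gg : (V → Option V) → ℝ,
      varVal E gg = expVal E (fun f => gg f ^ 2) - (expVal E gg) ^ 2 := by
    intro gg
    unfold varVal expVal
    show (∑ f ∈ forests E, (gg f - (∑ f ∈ forests E, gg f) / N) ^ 2) / N
        = (∑ f ∈ forests E, gg f ^ 2) / N - ((∑ f ∈ forests E, gg f) / N) ^ 2
    have hexpand : ∑ f ∈ forests E, (gg f - (∑ f ∈ forests E, gg f) / N) ^ 2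
        = (∑ f ∈ forests E, gg f ^ 2)
          - 2 * ((∑ f ∈ forests E, gg f) / N) * (∑ f ∈ forests E, gg f)
          + N * ((∑ f ∈ forests E, gg f) / N) ^ 2 := by
      rw [Finset.sum_congr rfl (fun f _ => by
        show (gg f - (∑ f ∈ forests E, gg f) / N) ^ 2 = gg f ^ 2
          - (2 * ((∑ f ∈ forests E, gg f) / N)) * gg f
          + ((∑ f ∈ forests E, gg f) / N) ^ 2
        ring)]
      rw [Finset.sum_add_distrib, Finset.sum_sub_distrib, ← Finset.mul_sum,
        Finset.sum_const, nsmul_eq_mul, ← hN]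
    rw [hexpand]
    field_simp
    ring
  -- the general variance formula
  have hvarX : ∀ α : ℝ,
      varVal E (fun f => α * indEst i j f +
          (1 - α) * ((1 / (1 + d)) * ∑ k ∈ inNbrs E j, indEst i k f))
        = (fOmega E i j * (2 + d) / (1 + d)) * (α - 1 / (2 + d)) ^ 2 +
            fOmega E i j / (2 + d) - (fOmega E i j) ^ 2 := by
    intro α
    rw [hfun α, hvar]
    have e1 : expVal E (fun f => (α * indEst i j f +
        (1 - α) * ((1 / (1 + d)) * if E (rootOf f i) j then (1 : ℝ) else 0)) ^ 2)
        = (α ^ 2 * (A : ℝ) + ((1 - α) * (1 / (1 + d))) ^ 2 * ((1 + d) * (A : ℝ))) / N := by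
      unfold expVal
      rw [← hN, hsumX2 α]
    have e2 : expVal E (fun f => α * indEst i j f +
        (1 - α) * ((1 / (1 + d)) * if E (rootOf f i) j then (1 : ℝ) else 0))
        = (α * (A : ℝ) + (1 - α) * (1 / (1 + d)) * ((1 + d) * (A : ℝ))) / N := by
      unfold expVal
      rw [← hN, hsumX α]
    rw [e1, e2, hω]
    field_simp
    ring
  -- unbiasedness
  have hmean : ∀ α : ℝ,
      expVal E (fun f => α * indEst i j f +
          (1 - α) * ((1 / (1 + d)) * ∑ k ∈ inNbrs E j, indEst i k f))
        = fOmega E i j := by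
    intro α
    rw [hfun α]
    show (∑ f ∈ forests E, (α * indEst i j f +
        (1 - α) * ((1 / (1 + d)) * if E (rootOf f i) j then (1 : ℝ) else 0)))
        / ((forests E).card : ℝ) = fOmega E i j
    rw [← hN, hsumX α, hω]
    field_simp
    ring
  have hmin : varVal E (fun f => (1 / (2 + d)) * indEst i j f +
        (1 - 1 / (2 + d)) * ((1 / (1 + d)) * ∑ k ∈ inNbrs E j, indEst i k f))
      = fOmega E i j / (2 + d) - (fOmega E i j) ^ 2 := by
    rw [hvarX (1 / (2 + d))]
    simp
  refine ⟨hmean, hvarX, hmin, ?_⟩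
  intro α
  rw [hmin, hvarX α]
  have hω0 : 0 ≤ fOmega E i j := by
    rw [hω]
    positivity
  have hterm : 0 ≤ (fOmega E i j * (2 + d) / (1 + d)) * (α - 1 / (2 + d)) ^ 2 := by
    apply mul_nonneg
    · apply div_nonneg
      · apply mul_nonneg hω0
        linarith
      · linarith
    · exact sq_nonneg _
  linarith
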